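/- arXiv:1907.06552 — 2 statements merged into one kernel-verified Lean document; each statement's English description precedes it below -/
import Mathlib

section
/- Fix $m \geq 1$ and define $\mathsf{y}_{a,b} = (w_1 - w_2)^{\max(b - ma, 0)} u^a v^b$ in $R = \mathbb{C}[w_1, w_2, u^{\pm 1}, v^{\pm 1}]$. The $\mathbb{C}$-subalgebra of $R$ generated by $\{w_1, w_2\} \cup \{\mathsf{y}_{a,b} : (a,b) \in \mathbb{Z}^2\}$ is equal to the subalgebra generated by $w_1$, $\mathsf{y}_{1,m}$, $\mathsf{y}_{-1,-m}$, $\mathsf{y}_{0,1}$, and $\mathsf{y}_{0,-1}$. -/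
open MvPolynomial

/-- The Laurent polynomial ring `ℂ[w₁, w₂, u^{±1}, v^{±1}]`. -/
noncomputable abbrev LaurentRing : Type :=
  AddMonoidAlgebra (MvPolynomial (Fin 2) ℂ) (ℤ × ℤ)

/-- `w₁` as an element of `ℂ[w₁, w₂, u^{±1}, v^{±1}]`. -/
noncomputable def w₁ : LaurentRing := AddMonoidAlgebra.single (0, 0) (X 0)

/-- `w₂` as an element of `ℂ[w₁, w₂, u^{±1}, v^{±1}]`. -/
noncomputable def w₂ : LaurentRing := AddMonoidAlgebra.single (0, 0) (X 1)

/-- `𝗒_{a,b} = (w₁ - w₂)^{max(b - ma, 0)} u^a v^b`, where `u^a v^b` is the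
monomial `single (a,b) 1`. -/
noncomputable def y (m : ℕ) (a b : ℤ) : LaurentRing :=
  AddMonoidAlgebra.single (a, b) ((X 0 - X 1) ^ (max (b - m * a) 0).toNat)

lemma pow01 (m n : ℕ) : (y m 0 1) ^ n =
    AddMonoidAlgebra.single ((0 : ℤ), (n : ℤ)) ((X 0 - X 1 : MvPolynomial (Fin 2) ℂ) ^ n) := by
  rw [y, AddMonoidAlgebra.single_pow]
  congr 1
  · simp [Prod.ext_iff]
  · rw [← pow_mul]; congr 1; simp

lemma pow0m1 (m n : ℕ) : (y m 0 (-1)) ^ n =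
    AddMonoidAlgebra.single ((0 : ℤ), -(n : ℤ)) (1 : MvPolynomial (Fin 2) ℂ) := by
  simp [y, AddMonoidAlgebra.single_pow]

lemma pow1m (m n : ℕ) : (y m 1 m) ^ n =
    AddMonoidAlgebra.single (((n : ℤ), (m : ℤ) * n)) (1 : MvPolynomial (Fin 2) ℂ) := by
  simp [y, AddMonoidAlgebra.single_pow, mul_comm]

lemma powm1m (m n : ℕ) : (y m (-1) (-m)) ^ n =
    AddMonoidAlgebra.single ((-(n : ℤ), (m : ℤ) * (-n))) (1 : MvPolynomial (Fin 2) ℂ) := by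
  have : (-(m:ℤ) - (m:ℤ) * (-1)) = 0 := by ring
  simp [y, AddMonoidAlgebra.single_pow, this, mul_comm]

lemma ua_mem (m : ℕ) (a : ℤ) :
    (AddMonoidAlgebra.single ((a, (m : ℤ) * a)) (1 : MvPolynomial (Fin 2) ℂ) : LaurentRing) ∈
      Algebra.adjoin ℂ {w₁, y m 1 m, y m (-1) (-m), y m 0 1, y m 0 (-1)} := by
  rcases le_or_gt 0 a with h | h
  · obtain ⟨n, rfl⟩ := Int.eq_ofNat_of_zero_le h
    rw [← pow1m m n]
    exact pow_mem (Algebra.subset_adjoin (by simp)) n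
  · obtain ⟨n, rfl⟩ : ∃ n : ℕ, a = -(n : ℤ) := ⟨a.natAbs, by omega⟩
    rw [← powm1m m n]
    exact pow_mem (Algebra.subset_adjoin (by simp)) n

lemma y_mem (m : ℕ) (a b : ℤ) :
    y m a b ∈ Algebra.adjoin ℂ {w₁, y m 1 m, y m (-1) (-m), y m 0 1, y m 0 (-1)} := by
  rcases le_or_gt ((m : ℤ) * a) b with h | h
  · have key : y m a b =
        (AddMonoidAlgebra.single ((a, (m : ℤ) * a)) (1 : MvPolynomial (Fin 2) ℂ) : LaurentRing)
          * (y m 0 1) ^ (b - (m : ℤ) * a).toNat := by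
      rw [pow01, y, AddMonoidAlgebra.single_mul_single, one_mul]
      congr 1
      · simp [Prod.ext_iff]; omega
      · congr 1; omega
    rw [key]
    exact mul_mem (ua_mem m a) (pow_mem (Algebra.subset_adjoin (by simp)) _)
  · have key : y m a b =
        (AddMonoidAlgebra.single ((a, (m : ℤ) * a)) (1 : MvPolynomial (Fin 2) ℂ) : LaurentRing)
          * (y m 0 (-1)) ^ ((m : ℤ) * a - b).toNat := by
      rw [pow0m1, y, AddMonoidAlgebra.single_mul_single, one_mul]
      congr 1
      · simp [Prod.ext_iff]; omega
      · have : max (b - (m : ℤ) * a) 0 = 0 := by omega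
        simp [this]
    rw [key]
    exact mul_mem (ua_mem m a) (pow_mem (Algebra.subset_adjoin (by simp)) _)

/-- The Coulomb branch of the rank-2 theory: the subalgebra generated by
`w₁, w₂` and all `𝗒_{a,b}` is generated by `w₁, 𝗒_{1,m}, 𝗒_{-1,-m}, 𝗒_{0,1},
𝗒_{0,-1}`. -/
theorem stmt11 (m : ℕ) (hm : 1 ≤ m) :
    Algebra.adjoin ℂ ({w₁, w₂} ∪ Set.range (fun p : ℤ × ℤ => y m p.1 p.2)) =
      Algebra.adjoin ℂ {w₁, y m 1 m, y m (-1) (-m), y m 0 1, y m 0 (-1)} := by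
  apply le_antisymm
  · rw [Algebra.adjoin_le_iff]
    rintro x (hx | ⟨⟨a, b⟩, rfl⟩)
    · rcases hx with rfl | rfl
      · exact Algebra.subset_adjoin (by simp)
      · have hw : w₂ = w₁ - y m 0 1 * y m 0 (-1) := by
          rw [y, y, AddMonoidAlgebra.single_mul_single, w₁, w₂]
          norm_num
        rw [hw]
        exact sub_mem (Algebra.subset_adjoin (by simp))
          (mul_mem (Algebra.subset_adjoin (by simp)) (Algebra.subset_adjoin (by simp)))
    · exact y_mem m a b
  · rw [Algebra.adjoin_le_iff]
    rintro x hx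
    rcases hx with rfl | rfl | rfl | rfl | rfl
    · exact Algebra.subset_adjoin (Or.inl (by simp))
    · exact Algebra.subset_adjoin (Or.inr ⟨(1, m), rfl⟩)
    · exact Algebra.subset_adjoin (Or.inr ⟨(-1, -m), rfl⟩)
    · exact Algebra.subset_adjoin (Or.inr ⟨(0, 1), rfl⟩)
    · exact Algebra.subset_adjoin (Or.inr ⟨(0, -1), rfl⟩)
end

section
/- Fix integers $m \geq 1$ and $\lambda \geq 0$, and write $\lambda = m k' + k''$ with $0 \leq k'' < m$. Let $A = K[[x^m]] \subseteq B = K[[x]]$ for a field $K$. Then the $K$-vector space $\operatorname{Hom}_A(x^\lambda B, A) / \operatorname{Hom}_A(B, A)$ (quotient by the image under restriction of maps defined on $B$) has dimension $\lambda$ over $K$. -/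
open PowerSeries

/-- The subring `A = K[[x^m]]` of `B = K[[x]]`. -/
def powerSeriesSupportedOn (K : Type*) [Field K] (m : ℕ) : Subalgebra K (PowerSeries K) where
  carrier := {f | ∀ i, ¬ m ∣ i → PowerSeries.coeff i f = 0}
  mul_mem' {f g} hf hg := by
    intro i hi
    rw [PowerSeries.coeff_mul]
    apply Finset.sum_eq_zero
    intro p hp
    have hsum : p.1 + p.2 = i := Finset.HasAntidiagonal.mem_antidiagonal.mp hp
    by_cases h1 : m ∣ p.1
    · have h2 : ¬ m ∣ p.2 := fun h2 => hi (hsum ▸ dvd_add h1 h2)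
      rw [hg p.2 h2, mul_zero]
    · rw [hf p.1 h1, zero_mul]
  add_mem' {f g} hf hg := by
    intro i hi
    rw [map_add, hf i hi, hg i hi, add_zero]
  algebraMap_mem' k := by
    intro i hi
    have hi0 : i ≠ 0 := fun h => hi (h ▸ dvd_zero m)
    simp [PowerSeries.algebraMap_apply, PowerSeries.coeff_C, hi0]

/-- The `A`-submodule `x^λ B = x^λ K[[x]]` of `B = K[[x]]`, i.e. power series
whose coefficients vanish in degrees `< λ`. -/
def xPowMulSubmodule (K : Type*) [Field K] (m lam : ℕ) :
    Submodule (powerSeriesSupportedOn K m) (PowerSeries K) where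
  carrier := {f | ∀ i, i < lam → PowerSeries.coeff i f = 0}
  add_mem' {f g} hf hg := by
    intro i hi
    rw [map_add, hf i hi, hg i hi, add_zero]
  zero_mem' := by intro i _; simp
  smul_mem' a f hf := by
    intro i hi
    rw [Algebra.smul_def, PowerSeries.coeff_mul]
    apply Finset.sum_eq_zero
    intro p hp
    have hsum : p.1 + p.2 = i := Finset.HasAntidiagonal.mem_antidiagonal.mp hp
    have h2 : p.2 < lam := lt_of_le_of_lt (le_of_add_le_right hsum.le) hi
    rw [hf p.2 h2, mul_zero]

set_option synthInstance.maxHeartbeats 1000000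
set_option maxHeartbeats 2000000

namespace Stmt19Aux

variable {K : Type*} [Field K]

/-- Extract the coefficients in degrees `s + mℕ`, shifted down to degrees `mℕ`. -/
noncomputable def ext (m s : ℕ) (f : PowerSeries K) : PowerSeries K :=
  PowerSeries.mk fun n => if m ∣ n then coeff (s + n) f else 0

lemma coeff_ext (m s n : ℕ) (f : PowerSeries K) :
    coeff n (ext m s f) = if m ∣ n then coeff (s + n) f else 0 := coeff_mk _ _

lemma ext_mem (m s : ℕ) (f : PowerSeries K) : ext m s f ∈ powerSeriesSupportedOn K m := by
  intro i hi; simp [ext, coeff_mk, hi]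

lemma ext_add (m s : ℕ) (f g : PowerSeries K) :
    ext m s (f + g) = ext m s f + ext m s g := by
  ext n
  simp only [coeff_ext, map_add]
  split <;> simp

lemma ext_mul (m s : ℕ) (a f : PowerSeries K)
    (ha : a ∈ powerSeriesSupportedOn K m)
    (hf : ∀ q, q < s → q % m = s % m → coeff q f = 0) :
    ext m s (a * f) = a * ext m s f := by
  ext n
  by_cases hn : m ∣ n
  · rw [coeff_ext, if_pos hn, coeff_mul, coeff_mul,
      Finset.Nat.sum_antidiagonal_eq_sum_range_succ_mk,
      Finset.Nat.sum_antidiagonal_eq_sum_range_succ_mk]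
    have h2 : ∑ k ∈ Finset.range (s + n).succ, coeff k a * coeff (s + n - k) f
        = ∑ k ∈ Finset.range n.succ, coeff k a * coeff (s + n - k) f := by
      refine (Finset.sum_subset ?_ ?_).symm
      · intro k hk
        simp only [Finset.mem_range] at hk ⊢
        omega
      · intro k hk hk'
        simp only [Finset.mem_range] at hk hk'
        by_cases hdk : m ∣ k
        · have hq : s + n - k < s := by omega
          have hqm : (s + n - k) % m = s % m := by
            have hd : m ∣ s - (s + n - k) := by
              have he : s - (s + n - k) = k - n := by omega
              rw [he]; exact Nat.dvd_sub hdk hn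
            exact (Nat.modEq_iff_dvd' (by omega)).mpr hd
          rw [hf _ hq hqm, mul_zero]
        · rw [ha k hdk, zero_mul]
    rw [h2]
    refine Finset.sum_congr rfl ?_
    intro k hk
    simp only [Finset.mem_range] at hk
    rw [coeff_ext]
    by_cases hdk : m ∣ n - k
    · rw [if_pos hdk, show s + (n - k) = s + n - k by omega]
    · have hk2 : ¬ m ∣ k := fun h => hdk (Nat.dvd_sub hn h)
      rw [ha k hk2, zero_mul, zero_mul]
  · rw [coeff_ext, if_neg hn, coeff_mul]
    refine (Finset.sum_eq_zero ?_).symm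
    intro p hp
    have hsum : p.1 + p.2 = n := Finset.HasAntidiagonal.mem_antidiagonal.mp hp
    by_cases h1 : m ∣ p.1
    · have h2 : ¬ m ∣ p.2 := fun h2 => hn (hsum ▸ dvd_add h1 h2)
      rw [coeff_ext, if_neg h2, mul_zero]
    · rw [ha p.1 h1, zero_mul]

lemma ext_shift (m k r : ℕ) (f : PowerSeries K)
    (hf : ∀ q, q < m * k + r → q % m = (m * k + r) % m → coeff q f = 0) :
    ext m r f = X ^ (m * k) * ext m (m * k + r) f := by
  ext n
  rw [show (X : PowerSeries K) ^ (m * k) * ext m (m * k + r) f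
      = ext m (m * k + r) f * X ^ (m * k) from mul_comm _ _, coeff_mul_X_pow']
  by_cases hn : m ∣ n
  · by_cases hkn : m * k ≤ n
    · rw [if_pos hkn, coeff_ext, coeff_ext, if_pos hn,
        if_pos (Nat.dvd_sub hn (Dvd.intro k rfl))]
      rw [show m * k + r + (n - m * k) = r + n by omega]
    · rw [if_neg hkn, coeff_ext, if_pos hn]
      refine hf _ (by omega) ?_
      have hd : m ∣ m * k + r - (r + n) := by
        have he : m * k + r - (r + n) = m * k - n := by omega
        rw [he]; exact Nat.dvd_sub (Dvd.intro k rfl) hn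
      exact (Nat.modEq_iff_dvd' (by omega)).mpr hd
  · rw [coeff_ext, if_neg hn]
    by_cases hkn : m * k ≤ n
    · rw [if_pos hkn, coeff_ext, if_neg]
      intro hd
      exact hn (by
        have : n = n - m * k + m * k := by omega
        rw [this]
        exact dvd_add hd (Dvd.intro k rfl))
    · rw [if_neg hkn]

lemma decomp (m lam : ℕ) (hm : 0 < m) (f : PowerSeries K)
    (hf : ∀ q, q < lam → coeff q f = 0) :
    f = ∑ i ∈ Finset.range m, ext m (lam + i) f * X ^ (lam + i) := by
  ext n
  rw [map_sum]
  have hterm : ∀ i ∈ Finset.range m, coeff n (ext m (lam + i) f * X ^ (lam + i)) =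
      if lam + i ≤ n ∧ m ∣ (n - (lam + i)) then coeff n f else 0 := by
    intro i _
    rw [coeff_mul_X_pow']
    by_cases h : lam + i ≤ n
    · rw [if_pos h, coeff_ext]
      by_cases h2 : m ∣ n - (lam + i)
      · rw [if_pos h2, if_pos ⟨h, h2⟩,
          show lam + i + (n - (lam + i)) = n by omega]
      · rw [if_neg h2, if_neg (by tauto)]
    · rw [if_neg h, if_neg (by tauto)]
  rw [Finset.sum_congr rfl hterm]
  by_cases hn : lam ≤ n
  · have hmem : (n - lam) % m ∈ Finset.range m := Finset.mem_range.mpr (Nat.mod_lt _ hm)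
    rw [Finset.sum_eq_single_of_mem _ hmem]
    · rw [if_pos]
      refine ⟨by have := Nat.mod_le (n - lam) m; omega, ?_⟩
      have he : n - (lam + (n - lam) % m) = (n - lam) - (n - lam) % m := by omega
      rw [he]
      exact Nat.dvd_sub_mod _
    · intro i hi hne
      rw [if_neg]
      rintro ⟨h1, h2⟩
      apply hne
      simp only [Finset.mem_range] at hi
      have he : n - (lam + i) = (n - lam) - i := by omega
      rw [he] at h2
      obtain ⟨t, ht⟩ := h2
      have hni : n - lam = i + m * t := by omega
      rw [hni, Nat.add_mul_mod_self_left, Nat.mod_eq_of_lt hi]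
  · rw [hf n (by omega)]
    refine (Finset.sum_eq_zero ?_).symm
    intro i _
    rw [if_neg]
    rintro ⟨h1, _⟩
    omega

/-- coefficients ≡ `s` below `lam + i` vanish for `f` supported in degrees `≥ lam`. -/
lemma hfM (m lam i : ℕ) (hm : 0 < m) (hi : i < m) (f : PowerSeries K)
    (hf : ∀ q, q < lam → coeff q f = 0) :
    ∀ q, q < lam + i → q % m = (lam + i) % m → coeff q f = 0 := by
  intro q hq hqm
  by_cases h : q < lam
  · exact hf q h
  · exfalso
    have hd : m ∣ lam + i - q := (Nat.modEq_iff_dvd' (by omega)).mp hqm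
    have := Nat.le_of_dvd (by omega) hd
    omega

end Stmt19Aux


namespace Stmt19Aux

variable {K : Type*} [Field K]

/-- the unique `i < m` with `(lam + i) % m = d % m`. -/
def ifun (m lam d : ℕ) : ℕ := (d % m + (m - lam % m)) % m

lemma ifun_lt (m lam d : ℕ) (hm : 0 < m) : ifun m lam d < m := Nat.mod_lt _ hm

lemma ifun_mod (m lam d : ℕ) (hm : 0 < m) : (lam + ifun m lam d) % m = d % m := by
  have key : ((lam + ifun m lam d : ℕ) : ZMod m) = ((d : ℕ) : ZMod m) := by
    have h1 : lam % m ≤ m := (Nat.mod_lt _ hm).le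
    unfold ifun
    push_cast [ZMod.natCast_mod, Nat.cast_sub h1, ZMod.natCast_self]
    ring
  exact (ZMod.natCast_eq_natCast_iff _ _ _).mp key

lemma ifun_eq (m lam d : ℕ) (hm : 0 < m) (i : ℕ) (hi : i < m)
    (hd : (lam + i) % m = d % m) : ifun m lam d = i := by
  have h1 : (lam + ifun m lam d) % m = (lam + i) % m := (ifun_mod m lam d hm).trans hd.symm
  have h2 : ifun m lam d ≡ i [MOD m] := Nat.ModEq.add_left_cancel' lam h1
  rwa [Nat.ModEq, Nat.mod_eq_of_lt (ifun_lt m lam d hm), Nat.mod_eq_of_lt hi] at h2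

/-- `X^(lam+i)` as an element of `x^lam B`. -/
noncomputable def bas (K : Type*) [Field K] (m lam i : ℕ) : xPowMulSubmodule K m lam :=
  ⟨X ^ (lam + i), by
    intro q hq
    rw [coeff_X_pow, if_neg (by omega)]⟩

/-- `X^(m*j)` as an element of `A`. -/
noncomputable def xmj (K : Type*) [Field K] (m j : ℕ) : powerSeriesSupportedOn K m :=
  ⟨X ^ (m * j), by
    intro q hq
    rw [coeff_X_pow, if_neg (fun h => hq ⟨j, h⟩)]⟩

/-- the `i`-th coordinate map `x^lam B → A` w.r.t. the basis `X^(lam+i)`. -/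
noncomputable def coordM (K : Type*) [Field K] (m lam : ℕ) (hm : 0 < m) (i : ℕ) (hi : i < m) :
    (xPowMulSubmodule K m lam) →ₗ[powerSeriesSupportedOn K m] (powerSeriesSupportedOn K m) where
  toFun f := ⟨ext m (lam + i) f, ext_mem m _ _⟩
  map_add' f g := Subtype.ext (by
    show ext m (lam + i) ((f : PowerSeries K) + (g : PowerSeries K))
      = ext m (lam + i) f + ext m (lam + i) g
    exact ext_add m (lam + i) (f : PowerSeries K) (g : PowerSeries K))
  map_smul' a f := Subtype.ext (by
    show ext m (lam + i) ((a : PowerSeries K) * (f : PowerSeries K))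
      = (a : PowerSeries K) * ext m (lam + i) (f : PowerSeries K)
    exact ext_mul m (lam + i) (a : PowerSeries K) (f : PowerSeries K) a.2
      (hfM m lam i hm hi (f : PowerSeries K) (fun q hq => f.2 q hq)))

/-- the `r`-th coordinate map `B → A` w.r.t. the basis `X^r`, `r < m`. -/
noncomputable def coordB (K : Type*) [Field K] (m : ℕ) (r : ℕ) (hr : r < m) :
    (PowerSeries K) →ₗ[powerSeriesSupportedOn K m] (powerSeriesSupportedOn K m) where
  toFun f := ⟨ext m r f, ext_mem m _ _⟩
  map_add' f g := Subtype.ext (by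
    show ext m r (f + g) = ext m r f + ext m r g
    exact ext_add m r f g)
  map_smul' a f := Subtype.ext (by
    show ext m r ((a : PowerSeries K) * f) = (a : PowerSeries K) * ext m r f
    exact ext_mul m r a f a.2 (by
      intro q hq hqm
      rw [Nat.mod_eq_of_lt (hq.trans hr), Nat.mod_eq_of_lt hr] at hqm
      omega))

/-- the obstruction map. -/
noncomputable def Phi (K : Type*) [Field K] (m lam : ℕ) (hm : 0 < m) :
    ((xPowMulSubmodule K m lam) →ₗ[powerSeriesSupportedOn K m] (powerSeriesSupportedOn K m))
      →ₗ[K] (Fin lam → K) where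
  toFun G d := coeff (m * (d.1 / m)) ((G (bas K m lam (ifun m lam d.1)) : PowerSeries K))
  map_add' G G' := by
    funext d
    simp only [LinearMap.add_apply, Pi.add_apply, Submodule.coe_add, Subalgebra.coe_add,
      map_add, AddMemClass.coe_add]
  map_smul' c G := by
    funext d
    simp only [LinearMap.smul_apply, RingHom.id_apply, Pi.smul_apply, SetLike.val_smul,
      map_smul, smul_eq_mul]

end Stmt19Aux

namespace Stmt19Aux

variable {K : Type*} [Field K]

lemma ext_basX (m lam : ℕ) (hm : 0 < m) (i i' : ℕ) (hi : i < m) (hi' : i' < m) :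
    ext m (lam + i) ((X : PowerSeries K) ^ (lam + i')) = if i = i' then 1 else 0 := by
  ext n
  rw [coeff_ext]
  by_cases h : i = i'
  · subst h
    rw [if_pos rfl]
    by_cases hn : n = 0
    · subst hn
      simp [coeff_X_pow]
    · rw [PowerSeries.coeff_one, if_neg hn, coeff_X_pow]
      split_ifs with h1 h2
      · exact absurd h2 (by omega)
      · rfl
      · rfl
  · rw [if_neg h, map_zero, coeff_X_pow]
    split_ifs with h1 h2
    · exfalso
      have hn2 : n < m := by omega
      have hn0 : n ≠ 0 := by omega
      exact absurd (Nat.le_of_dvd (Nat.pos_of_ne_zero hn0) h1) (by omega)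
    · rfl
    · rfl

/-- generators of `Hom_A(x^lam B, A)` detecting the obstruction coefficients. -/
noncomputable def Ebas (K : Type*) [Field K] (m lam : ℕ) (hm : 0 < m) (d : ℕ) :
    (xPowMulSubmodule K m lam) →ₗ[powerSeriesSupportedOn K m] (powerSeriesSupportedOn K m) :=
  (xmj K m (d / m)) • coordM K m lam hm (ifun m lam d) (ifun_lt m lam d hm)

lemma phi_Ebas (m lam : ℕ) (hm : 0 < m) (d d' : Fin lam) :
    Phi K m lam hm (Ebas K m lam hm d.1) d' = if d = d' then 1 else 0 := by
  have hstep : Phi K m lam hm (Ebas K m lam hm d.1) d'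
      = coeff (m * (d'.1 / m)) ((X : PowerSeries K) ^ (m * (d.1 / m)) *
          ext m (lam + ifun m lam d.1) ((X : PowerSeries K) ^ (lam + ifun m lam d'.1))) := rfl
  rw [hstep, ext_basX m lam hm _ _ (ifun_lt m lam d.1 hm) (ifun_lt m lam d'.1 hm)]
  by_cases h : ifun m lam d.1 = ifun m lam d'.1
  · rw [if_pos h, mul_one, coeff_X_pow]
    have hd : d.1 % m = d'.1 % m := by
      rw [← ifun_mod m lam d.1 hm, ← ifun_mod m lam d'.1 hm, h]
    split_ifs with h2 h3 h3
    · rfl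
    · exfalso
      apply h3
      apply Fin.ext
      have e1 := Nat.div_add_mod d.1 m
      have e2 := Nat.div_add_mod d'.1 m
      omega
    · exfalso
      apply h2
      rw [h3]
    · rfl
  · rw [if_neg h, mul_zero, map_zero, if_neg]
    intro hdd
    exact h (by rw [hdd])

lemma phi_surj (m lam : ℕ) (hm : 0 < m) : Function.Surjective (Phi K m lam hm) := by
  intro v
  refine ⟨∑ d : Fin lam, v d • Ebas K m lam hm d.1, ?_⟩
  rw [map_sum]
  funext d'
  rw [Finset.sum_apply]
  have hterm : ∀ d : Fin lam, (Phi K m lam hm (v d • Ebas K m lam hm d.1)) d'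
      = if d = d' then v d else 0 := by
    intro d
    rw [map_smul]
    simp only [Pi.smul_apply, smul_eq_mul]
    rw [phi_Ebas m lam hm d d']
    split_ifs <;> simp
  rw [Finset.sum_congr rfl (fun d _ => hterm d), Finset.sum_ite_eq' Finset.univ d' v]
  simp

lemma phi_res (m lam : ℕ) (hm : 0 < m)
    (F : PowerSeries K →ₗ[powerSeriesSupportedOn K m] (powerSeriesSupportedOn K m)) :
    Phi K m lam hm (F.comp (xPowMulSubmodule K m lam).subtype) = 0 := by
  funext d
  set i := ifun m lam d.1 with hidef
  have hilt : i < m := ifun_lt m lam d.1 hm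
  have hsplit : m * ((lam + i) / m) + (lam + i) % m = lam + i := Nat.div_add_mod _ _
  have hrd : (lam + i) % m = d.1 % m := ifun_mod m lam d.1 hm
  have hjk : d.1 / m < (lam + i) / m := by
    have e1 := Nat.div_add_mod d.1 m
    have hd := d.2
    by_contra hc
    push_neg at hc
    have := Nat.mul_le_mul_left m hc
    omega
  have hstep : Phi K m lam hm (F.comp (xPowMulSubmodule K m lam).subtype) d
      = coeff (m * (d.1 / m)) ((F ((X : PowerSeries K) ^ (lam + i)) : PowerSeries K)) := rfl
  have hXsmul : (X : PowerSeries K) ^ (lam + i)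
      = (xmj K m ((lam + i) / m)) • ((X : PowerSeries K) ^ ((lam + i) % m)) := by
    show _ = ((X : PowerSeries K) ^ (m * ((lam + i) / m))) * _
    rw [← pow_add, hsplit]
  rw [hstep, hXsmul, map_smul]
  have hcoe : ((xmj K m ((lam + i) / m) • F ((X : PowerSeries K) ^ ((lam + i) % m))
      : powerSeriesSupportedOn K m) : PowerSeries K)
      = ((F ((X : PowerSeries K) ^ ((lam + i) % m)) : powerSeriesSupportedOn K m) : PowerSeries K)
        * (X : PowerSeries K) ^ (m * ((lam + i) / m)) := by
    rw [mul_comm]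
    rfl
  rw [hcoe, coeff_mul_X_pow', if_neg, Pi.zero_apply]
  intro hle
  have := Nat.le_of_mul_le_mul_left hle hm
  omega

lemma ker_sub (m lam : ℕ) (hm : 0 < m)
    (G : (xPowMulSubmodule K m lam) →ₗ[powerSeriesSupportedOn K m] (powerSeriesSupportedOn K m))
    (hG : Phi K m lam hm G = 0) :
    ∃ F : PowerSeries K →ₗ[powerSeriesSupportedOn K m] (powerSeriesSupportedOn K m),
      F.comp (xPowMulSubmodule K m lam).subtype = G := by
  have hcoeff : ∀ i : Fin m, ∀ q, q < m * ((lam + i.1) / m) →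
      coeff q ((G (bas K m lam i.1)) : PowerSeries K) = 0 := by
    intro i q hq
    by_cases hdvd : m ∣ q
    · obtain ⟨t, rfl⟩ := hdvd
      have ht : t < (lam + i.1) / m := Nat.lt_of_mul_lt_mul_left hq
      set r := (lam + i.1) % m with hrdef
      have hrm : r < m := Nat.mod_lt _ hm
      have hsplit : m * ((lam + i.1) / m) + r = lam + i.1 := Nat.div_add_mod _ _
      have hdlam : m * t + r < lam := by
        have h5 : m * (t + 1) ≤ m * ((lam + i.1) / m) := Nat.mul_le_mul_left m ht
        have h6 : m * (t + 1) = m * t + m := by ring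
        have hi2 := i.2
        omega
      have hzero := congrFun hG ⟨m * t + r, hdlam⟩
      simp only [Pi.zero_apply] at hzero
      have hdm : (m * t + r) % m = r := by rw [Nat.mul_add_mod, Nat.mod_eq_of_lt hrm]
      have hdd : (m * t + r) / m = t := by rw [Nat.mul_add_div hm, Nat.div_eq_of_lt hrm, add_zero]
      have hif : ifun m lam (m * t + r) = i.1 :=
        ifun_eq m lam _ hm i.1 i.2 (by rw [hdm])
      have hz2 : coeff (m * ((m * t + r) / m))
          ((G (bas K m lam (ifun m lam (m * t + r)))) : PowerSeries K) = 0 := hzero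
      rwa [hdd, hif] at hz2
    · exact (G (bas K m lam i.1)).2 _ hdvd
  have hdvd : ∀ i : Fin m, ∃ a : powerSeriesSupportedOn K m,
      ((G (bas K m lam i.1)) : PowerSeries K)
        = X ^ (m * ((lam + i.1) / m)) * (a : PowerSeries K) := by
    intro i
    obtain ⟨b, hb⟩ := (PowerSeries.X_pow_dvd_iff).mpr (hcoeff i)
    refine ⟨⟨b, ?_⟩, hb⟩
    intro q hq
    have h3 := congrArg (coeff (q + m * ((lam + i.1) / m))) hb
    rw [coeff_X_pow_mul] at h3
    rw [← h3]
    refine (G (bas K m lam i.1)).2 _ ?_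
    intro hdq
    exact hq ((Nat.dvd_add_right (Dvd.intro _ rfl)).mp (by rwa [add_comm] at hdq))
  choose a ha using hdvd
  refine ⟨∑ i : Fin m, a i • coordB K m ((lam + i.1) % m) (Nat.mod_lt _ hm), ?_⟩
  apply LinearMap.ext
  intro f
  apply Subtype.ext
  have hf2 : ∀ q, q < lam → coeff q (f : PowerSeries K) = 0 := fun q hq => f.2 q hq
  have hL : ((((∑ i : Fin m, a i • coordB K m ((lam + i.1) % m) (Nat.mod_lt _ hm)).comp
      (xPowMulSubmodule K m lam).subtype) f : powerSeriesSupportedOn K m) : PowerSeries K)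
      = ∑ i : Fin m, ((a i : PowerSeries K) * ext m ((lam + i.1) % m) (f : PowerSeries K)) := by
    rw [LinearMap.comp_apply, LinearMap.sum_apply, AddSubmonoidClass.coe_finset_sum]
    refine Finset.sum_congr rfl ?_
    intro i _
    rfl
  have hdec : f = ∑ i : Fin m, (coordM K m lam hm i.1 i.2 f) • bas K m lam i.1 := by
    apply Subtype.ext
    rw [AddSubmonoidClass.coe_finset_sum]
    calc (f : PowerSeries K)
        = ∑ i ∈ Finset.range m, ext m (lam + i) (f : PowerSeries K) * X ^ (lam + i) :=
          decomp m lam hm (f : PowerSeries K) hf2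
      _ = ∑ i : Fin m, ext m (lam + i.1) (f : PowerSeries K) * X ^ (lam + i.1) :=
          (Fin.sum_univ_eq_sum_range _ m).symm
      _ = _ := by
          refine Finset.sum_congr rfl ?_
          intro i _
          rfl
  have hR : ((G f : powerSeriesSupportedOn K m) : PowerSeries K)
      = ∑ i : Fin m, ext m (lam + i.1) (f : PowerSeries K)
          * ((G (bas K m lam i.1)) : PowerSeries K) := by
    conv_lhs => rw [hdec]
    rw [map_sum, AddSubmonoidClass.coe_finset_sum]
    refine Finset.sum_congr rfl ?_
    intro i _
    rw [map_smul]
    rfl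
  rw [hL, hR]
  refine Finset.sum_congr rfl ?_
  intro i _
  rw [ha i]
  have hsplit : m * ((lam + i.1) / m) + (lam + i.1) % m = lam + i.1 := Nat.div_add_mod _ _
  have hS : ext m ((lam + i.1) % m) (f : PowerSeries K)
      = X ^ (m * ((lam + i.1) / m)) * ext m (lam + i.1) (f : PowerSeries K) := by
    have h7 := ext_shift m ((lam + i.1) / m) ((lam + i.1) % m) (f : PowerSeries K)
      (by rw [hsplit]; exact hfM m lam i.1 hm i.2 _ hf2)
    rwa [hsplit] at h7
  rw [hS]
  ring

end Stmt19Aux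

/-- With `A = K[[x^m]] ⊆ B = K[[x]]` and `λ = m k' + k''`, `0 ≤ k'' < m`, the
`K`-vector space `Hom_A(x^λ B, A) / Hom_A(B, A)` (quotient by the image of the
restriction map) has dimension `λ`. -/
theorem stmt19 (K : Type*) [Field K] (m : ℕ) (hm : 0 < m) (lam : ℕ) :
    ∃ W : Submodule K
        ((xPowMulSubmodule K m lam) →ₗ[powerSeriesSupportedOn K m]
          (powerSeriesSupportedOn K m)),
      (W : Set _) = Set.range
        (fun F : PowerSeries K →ₗ[powerSeriesSupportedOn K m]
            (powerSeriesSupportedOn K m) =>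
          F.comp (xPowMulSubmodule K m lam).subtype) ∧
      Module.finrank K
        (@HasQuotient.Quotient _ _ (@Submodule.hasQuotient K
            ((xPowMulSubmodule K m lam) →ₗ[powerSeriesSupportedOn K m]
              (powerSeriesSupportedOn K m)) _ LinearMap.addCommGroup LinearMap.module) W) = lam := by
  refine ⟨LinearMap.ker (Stmt19Aux.Phi K m lam hm), ?_, ?_⟩
  · ext G
    simp only [SetLike.mem_coe, LinearMap.mem_ker, Set.mem_range]
    constructor
    · intro hG
      exact Stmt19Aux.ker_sub m lam hm G hG
    · rintro ⟨F, rfl⟩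
      exact Stmt19Aux.phi_res m lam hm F
  · have hs : Function.Surjective (Stmt19Aux.Phi K m lam hm) := Stmt19Aux.phi_surj m lam hm
    have h := (@LinearMap.quotKerEquivOfSurjective K _ (Fin lam → K) _ LinearMap.addCommGroup _ LinearMap.module
      _ (Stmt19Aux.Phi K m lam hm) hs).finrank_eq.trans (Module.finrank_fin_fun K)
    exact h
end
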